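/- Let r be a positive real number, and define P = {f ∈ ℤ[x,x⁻¹] | f(r) > 0} where f(r) denotes evaluation at r, together with, if r is algebraic, some compatible choice on {f | f(r)=0}. If r is transcendental, then P is the positive cone of an ⟨x⟩-invariant linear order on the additive group ℤ[x,x⁻¹]: P is closed under addition, under multiplication by x and x⁻¹, and ℤ[x,x⁻¹] = P ⊔ (-P) ⊔ {0}. -/

import Mathlib

open LaurentPolynomial

/-- Evaluation of an integer Laurent polynomial at a nonzero real number. -/
noncomputable def evalAt (r : ℝ) (f : LaurentPolynomial ℤ) : ℝ :=
  f.coeff.sum fun k a => (a : ℝ) * r ^ k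

/-- Evaluation as an algebra homomorphism, for `r ≠ 0`. -/
noncomputable def evalHom (r : ℝ) (hr : r ≠ 0) : LaurentPolynomial ℤ →ₐ[ℤ] ℝ :=
  AddMonoidAlgebra.lift ℤ ℝ ℤ
    ((Units.coeHom ℝ).comp (zpowersHom ℝˣ (Units.mk0 r hr)))

theorem evalHom_eq (r : ℝ) (hr : r ≠ 0) (f : LaurentPolynomial ℤ) :
    evalHom r hr f = evalAt r f := by
  rw [evalHom, AddMonoidAlgebra.lift_apply]
  refine Finsupp.sum_congr fun k _ => ?_
  simp [zsmul_eq_mul, Units.val_zpow_eq_zpow_val]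

theorem evalHom_T (r : ℝ) (hr : r ≠ 0) (n : ℤ) : evalHom r hr (T n) = r ^ n := by
  rw [T, evalHom, AddMonoidAlgebra.lift_single]
  simp [Units.val_zpow_eq_zpow_val]

theorem evalAt_ne_zero (r : ℝ) (hr : r ≠ 0) (htr : Transcendental ℤ r)
    (f : LaurentPolynomial ℤ) (hf : f ≠ 0) : evalAt r f ≠ 0 := by
  obtain ⟨n, p, hp⟩ := f.exists_T_pow
  have hp0 : p ≠ 0 := by
    rintro rfl
    simp only [map_zero] at hp
    exact hf (((isUnit_T (n : ℤ)).mul_left_eq_zero).mp hp.symm)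
  have hpev : Polynomial.aeval r p ≠ 0 := fun h => htr ⟨p, hp0, h⟩
  have key : evalHom r hr (Polynomial.toLaurent p) = Polynomial.aeval r p := by
    have : (evalHom r hr).comp (Polynomial.toLaurentAlg : Polynomial ℤ →ₐ[ℤ] LaurentPolynomial ℤ)
        = Polynomial.aeval r := by
      apply Polynomial.algHom_ext
      show evalHom r hr (Polynomial.toLaurentAlg Polynomial.X) = Polynomial.aeval r Polynomial.X
      rw [Polynomial.toLaurentAlg_apply, Polynomial.toLaurent_X, evalHom_T]
      simp
    calc evalHom r hr (Polynomial.toLaurent p) = ((evalHom r hr).comp Polynomial.toLaurentAlg) p := rfl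
    _ = Polynomial.aeval r p := by rw [this]
  intro h0
  apply hpev
  rw [← key, hp, map_mul, evalHom_eq, h0, zero_mul]

theorem stmt13 (r : ℝ) (hr : 0 < r) (htr : Transcendental ℤ r) :
    (∀ f ∈ {f : LaurentPolynomial ℤ | 0 < evalAt r f},
      ∀ g ∈ {f : LaurentPolynomial ℤ | 0 < evalAt r f},
        f + g ∈ {f : LaurentPolynomial ℤ | 0 < evalAt r f}) ∧
    (∀ f ∈ {f : LaurentPolynomial ℤ | 0 < evalAt r f},
        T 1 * f ∈ {f : LaurentPolynomial ℤ | 0 < evalAt r f} ∧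
        T (-1) * f ∈ {f : LaurentPolynomial ℤ | 0 < evalAt r f}) ∧
    (∀ f : LaurentPolynomial ℤ,
        f ∈ {f : LaurentPolynomial ℤ | 0 < evalAt r f} ∨
        -f ∈ {f : LaurentPolynomial ℤ | 0 < evalAt r f} ∨ f = 0) ∧
    (∀ f : LaurentPolynomial ℤ,
        ¬ (f ∈ {f : LaurentPolynomial ℤ | 0 < evalAt r f} ∧
           -f ∈ {f : LaurentPolynomial ℤ | 0 < evalAt r f})) ∧
    (0 : LaurentPolynomial ℤ) ∉ {f : LaurentPolynomial ℤ | 0 < evalAt r f} := by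
  have hr0 : r ≠ 0 := hr.ne'
  have hadd : ∀ f g, evalAt r (f + g) = evalAt r f + evalAt r g := fun f g => by
    rw [← evalHom_eq r hr0, ← evalHom_eq r hr0, ← evalHom_eq r hr0, map_add]
  have hneg : ∀ f, evalAt r (-f) = -evalAt r f := fun f => by
    rw [← evalHom_eq r hr0, ← evalHom_eq r hr0, map_neg]
  have hT : ∀ n f, evalAt r (T n * f) = r ^ n * evalAt r f := fun n f => by
    rw [← evalHom_eq r hr0, ← evalHom_eq r hr0, map_mul, evalHom_T]
  have h0 : evalAt r 0 = 0 := by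
    rw [← evalHom_eq r hr0, map_zero]
  refine ⟨fun f hf g hg => ?_, fun f hf => ?_, fun f => ?_, fun f ⟨h1, h2⟩ => ?_, ?_⟩
  · simpa [Set.mem_setOf_eq, hadd] using add_pos hf hg
  · constructor <;> simp only [Set.mem_setOf_eq, hT] <;>
      exact mul_pos (zpow_pos hr _) hf
  · rcases eq_or_ne f 0 with h | h
    · exact Or.inr (Or.inr h)
    · rcases (evalAt_ne_zero r hr0 htr f h).lt_or_gt with hl | hl
      · exact Or.inr (Or.inl (by simpa [Set.mem_setOf_eq, hneg] using hl))
      · exact Or.inl hl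
  · rw [Set.mem_setOf_eq, hneg] at h2
    rw [Set.mem_setOf_eq] at h1
    linarith
  · simp [Set.mem_setOf_eq, h0]
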